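/- Let G be a finite group generated by two elements a, b, each of order 3, with ⟨a⟩ ∩ ⟨b⟩ = {1}, and let H = 3-Cay(G,{a,b}). Then the dual hypergraph H* is (the edge-set of) a 3-regular bipartite simple graph on (2/3)|G| vertices (its vertices being the left cosets of ⟨a⟩ and of ⟨b⟩ in G, two cosets adjacent if and only if they intersect, with bipartition classes the ⟨a⟩-cosets and the ⟨b⟩-cosets), and the girth of this graph equals the girth of H. -/

import Mathlib

/-- A Berge cycle of length `ℓ` in the hypergraph with incidence relation `inc`:
distinct vertices `v i` and distinct hyperedges `e i` (indexed by `ZMod ℓ`)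
such that `e i` contains both `v i` and `v (i+1)`. -/
def BergeCycle {V E : Type*} (inc : V → E → Prop) (ℓ : ℕ) : Prop :=
  ∃ (v : ZMod ℓ → V) (e : ZMod ℓ → E),
    Function.Injective v ∧ Function.Injective e ∧
      ∀ i : ZMod ℓ, inc (v i) (e i) ∧ inc (v (i + 1)) (e i)

/-- The girth (in `ℕ∞`) of a hypergraph: the length of a shortest Berge cycle. -/
noncomputable def hypergraphGirth {V E : Type*} (inc : V → E → Prop) : ℕ∞ :=
  sInf {n : ℕ∞ | ∃ ℓ : ℕ, n = ℓ ∧ 2 ≤ ℓ ∧ BergeCycle inc ℓ}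

/-- The incidence relation of the Cayley hypergraph `3-Cay(G,{a,b})` (for `a`, `b`
of order 3): vertices are the elements of `G`, hyperedges are the left cosets of
`⟨a⟩` and of `⟨b⟩`, and `g` is incident with a coset iff it lies in it. -/
def cayInc (G : Type*) [Group G] (a b : G) :
    G → (G ⧸ Subgroup.zpowers a) ⊕ (G ⧸ Subgroup.zpowers b) → Prop :=
  fun g e =>
    match e with
    | Sum.inl p => (g : G ⧸ Subgroup.zpowers a) = p
    | Sum.inr q => (g : G ⧸ Subgroup.zpowers b) = q

/-- The dual hypergraph of `3-Cay(G,{a,b})`, viewed as a simple graph: vertices are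
the left cosets of `⟨a⟩` and of `⟨b⟩`, and two cosets (from different classes) are
adjacent iff they intersect. -/
def dualCayleyGraph (G : Type*) [Group G] (a b : G) :
    SimpleGraph ((G ⧸ Subgroup.zpowers a) ⊕ (G ⧸ Subgroup.zpowers b)) where
  Adj x y := (∃ g : G, cayInc G a b g x ∧ cayInc G a b g y) ∧ x.isLeft ≠ y.isLeft
  symm := by
    refine ⟨?_⟩
    rintro x y ⟨⟨g, h1, h2⟩, hne⟩
    exact ⟨⟨g, h2, h1⟩, hne.symm⟩
  loopless := by
    refine ⟨?_⟩
    rintro x ⟨-, hne⟩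
    exact hne rfl

section AuxLemmas
open Subgroup SimpleGraph

lemma three_dvd_sq_sub_one {t : ℤ} (h : ¬ (3:ℤ) ∣ t) : (3:ℤ) ∣ t * t - 1 := by
  have h3 : t % 3 = 1 ∨ t % 3 = 2 := by omega
  have hq : t = 3 * (t / 3) + t % 3 := by omega
  set q := t / 3 with hqdef
  rcases h3 with h1 | h1 <;> rw [hq, h1]
  · exact ⟨3*q*q + 2*q, by ring⟩
  · exact ⟨3*q*q + 4*q + 1, by ring⟩

lemma zpow_eq_one_of_mem_zpowers {G : Type*} [Group G] {x c : G} (hx : orderOf x = 3)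
    (hxc : x ∉ zpowers c) {t : ℤ} (h : x ^ t ∈ zpowers c) : x ^ t = 1 := by
  by_contra hne
  have h3 : ¬ (3:ℤ) ∣ t := by
    intro hd
    exact hne (orderOf_dvd_iff_zpow_eq_one.mp (by rw [hx]; exact hd))
  have hsq : x ^ (t * t) = x := by
    have h1 : x ^ (t * t - 1) = 1 := orderOf_dvd_iff_zpow_eq_one.mp
      (by rw [hx]; exact three_dvd_sq_sub_one h3)
    have : x ^ (t * t) = x ^ (t * t - 1) * x := by
      rw [← zpow_add_one]; ring_nf
    rw [this, h1, one_mul]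
  exact hxc (by rw [← hsq, zpow_mul]; exact zpow_mem h t)

lemma not_mem_zpowers_mul {G : Type*} [Group G] {a b : G}
    (ha : orderOf a = 3) (hb : orderOf b = 3)
    (hgen : Subgroup.closure {a, b} = ⊤)
    (hint : zpowers a ⊓ zpowers b = ⊥) :
    a ∉ zpowers (a * b) ∧ b ∉ zpowers (a * b) := by
  have hab : a ∈ zpowers (a*b) → b ∈ zpowers (a*b) := by
    intro h
    have : a⁻¹ * (a*b) ∈ zpowers (a*b) := mul_mem (inv_mem h) (mem_zpowers _)
    simpa [mul_assoc] using this
  have hba : b ∈ zpowers (a*b) → a ∈ zpowers (a*b) := by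
    intro h
    have : (a*b) * b⁻¹ ∈ zpowers (a*b) := mul_mem (mem_zpowers _) (inv_mem h)
    simpa [mul_assoc] using this
  suffices h : a ∉ zpowers (a*b) by exact ⟨h, fun hb' => h (hba hb')⟩
  intro haz
  have hbz := hab haz
  have htop : ∀ x : G, x ∈ zpowers (a*b) := by
    have : Subgroup.closure {a, b} ≤ zpowers (a*b) := by
      rw [Subgroup.closure_le]
      intro x hx
      rcases hx with rfl | hx
      · exact haz
      · rcases hx with rfl
        exact hbz
    rw [hgen] at this
    intro x; exact this (Subgroup.mem_top x)
  have hcomm : Commute a b := by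
    obtain ⟨s, hs⟩ := Subgroup.mem_zpowers_iff.mp haz
    obtain ⟨t, ht⟩ := Subgroup.mem_zpowers_iff.mp hbz
    have := Commute.zpow_zpow_self (a*b) s t
    rwa [hs, ht] at this
  obtain ⟨m, hm⟩ := Subgroup.mem_zpowers_iff.mp haz
  rw [hcomm.mul_zpow] at hm
  have hbm : b ^ m = a ^ (1 - m) := by
    have h' : (a ^ m)⁻¹ * (a ^ m * b ^ m) = (a ^ m)⁻¹ * a := by rw [hm]
    rw [inv_mul_cancel_left] at h'
    rw [h', show (1:ℤ) - m = -m + 1 by ring, zpow_add, zpow_one, zpow_neg]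
  have hmem : b ^ m ∈ zpowers a ⊓ zpowers b :=
    ⟨hbm ▸ zpow_mem (mem_zpowers a) (1-m), zpow_mem (mem_zpowers b) m⟩
  rw [hint, Subgroup.mem_bot] at hmem
  have h1 : ((orderOf b : ℕ) : ℤ) ∣ m := orderOf_dvd_iff_zpow_eq_one.mpr hmem
  have h2 : ((orderOf a : ℕ) : ℤ) ∣ 1 - m :=
    orderOf_dvd_iff_zpow_eq_one.mpr (by rw [← hbm]; exact hmem)
  rw [hb] at h1
  rw [ha] at h2
  have h1' : (3:ℤ) ∣ m := by exact_mod_cast h1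
  have h2' : (3:ℤ) ∣ 1 - m := by exact_mod_cast h2
  omega

lemma card_fiber {G : Type*} [Group G] (a : G) (p : G ⧸ zpowers a) :
    Nat.card {g : G // (g : G ⧸ zpowers a) = p} = orderOf a := by
  rw [← Nat.card_zpowers]
  apply Nat.card_eq_of_bijective (fun g => (⟨p.out⁻¹ * g.1, by
    have : ((p.out : G) : G ⧸ zpowers a) = (g.1 : G ⧸ zpowers a) := by
      rw [QuotientGroup.out_eq' p, g.2]
    exact QuotientGroup.eq.mp this⟩ : zpowers a))
  constructor
  · rintro ⟨g, hg⟩ ⟨g', hg'⟩ h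
    simp only [Subtype.mk.injEq, mul_right_injective] at h ⊢
    exact mul_left_cancel h
  · rintro ⟨s, hs⟩
    refine ⟨⟨p.out * s, ?_⟩, ?_⟩
    · rw [QuotientGroup.mk_mul_of_mem _ hs, QuotientGroup.out_eq' p]
    · simp

lemma map_range_succ_left {β : Type*} (f : ℕ → β) (m : ℕ) :
    (List.range (m+1)).map f = f 0 :: (List.range m).map (fun i => f (i+1)) := by
  rw [List.range_succ_eq_map, List.map_cons, List.map_map]; rfl

lemma exists_walk_of_chain {α : Type*} (G : SimpleGraph α) :
    ∀ (m : ℕ) (f : ℕ → α), (∀ i < m, G.Adj (f i) (f (i + 1))) →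
      ∃ w : G.Walk (f 0) (f m), w.length = m ∧
        w.support = (List.range (m + 1)).map f ∧
        w.edges = (List.range m).map fun i => s(f i, f (i + 1)) := by
  intro m
  induction m with
  | zero => exact fun f _ => ⟨Walk.nil, rfl, by simp [List.range_succ], by simp⟩
  | succ m ih =>
    intro f h
    obtain ⟨w, hl, hs, he⟩ := ih (fun i => f (i + 1)) (fun i hi => h (i + 1) (by omega))
    refine ⟨Walk.cons (h 0 (Nat.succ_pos m)) w, by simp [hl], ?_, ?_⟩
    · rw [Walk.support_cons, hs, map_range_succ_left f (m+1)]
    · rw [Walk.edges_cons, he, map_range_succ_left (fun i => s(f i, f (i+1))) m]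

lemma support_eq_map_getVert {α : Type*} {G : SimpleGraph α} {u v : α} (w : G.Walk u v) :
    w.support = (List.range (w.length + 1)).map w.getVert := by
  induction w with
  | nil => simp [Walk.getVert]
  | cons h p ih =>
    rw [Walk.support_cons, ih, Walk.length_cons, map_range_succ_left _ (p.length+1)]
    simp [SimpleGraph.Walk.getVert_cons_succ]

lemma IsCycle.getVert_injOn'' {α : Type*} {G : SimpleGraph α} {x : α} {w : G.Walk x x}
    (hw : w.IsCycle) : ∀ m, m < w.length → ∀ k, k < w.length →
      w.getVert m = w.getVert k → m = k := by
  have hnd : w.support.tail.Nodup := hw.2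
  rw [support_eq_map_getVert, map_range_succ_left, List.tail_cons] at hnd
  have hinj := List.inj_on_of_nodup_map hnd
  simp only [List.mem_range, Function.comp] at hinj
  have key : ∀ i < w.length, ∀ j < w.length, w.getVert (i+1) = w.getVert (j+1) → i = j :=
    fun i hi j hj hij => hinj hi hj hij
  have hlen : 1 ≤ w.length := by
    have := hw.three_le_length; omega
  intro m hm k hk hmk
  rcases Nat.eq_zero_or_pos m with rfl | hm1 <;> rcases Nat.eq_zero_or_pos k with rfl | hk1
  · rfl
  · -- getVert 0 = getVert k, 1 ≤ k < length
    exfalso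
    have h0 : w.getVert ((k-1)+1) = w.getVert ((w.length-1)+1) := by
      rw [Nat.sub_add_cancel hk1, Nat.sub_add_cancel hlen, Walk.getVert_length, ← hmk,
        Walk.getVert_zero]
    have := key (k-1) (by omega) (w.length-1) (by omega) h0
    omega
  · exfalso
    have h0 : w.getVert ((m-1)+1) = w.getVert ((w.length-1)+1) := by
      rw [Nat.sub_add_cancel hm1, Nat.sub_add_cancel hlen, Walk.getVert_length, hmk,
        Walk.getVert_zero]
    have := key (m-1) (by omega) (w.length-1) (by omega) h0
    omega
  · have h0 : w.getVert ((m-1)+1) = w.getVert ((k-1)+1) := by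
      rw [Nat.sub_add_cancel hm1, Nat.sub_add_cancel hk1]; exact hmk
    have := key (m-1) (by omega) (k-1) (by omega) h0
    omega

end AuxLemmas

section CayAux
open Subgroup SimpleGraph

variable {G : Type*} [Group G] {a b : G}

lemma cayInc_elim {g : G} {x : (G ⧸ zpowers a) ⊕ (G ⧸ zpowers b)} (h : cayInc G a b g x) :
    x = Sum.inl ((g : G) : G ⧸ zpowers a) ∨ x = Sum.inr ((g : G) : G ⧸ zpowers b) := by
  cases x with
  | inl p => exact Or.inl (by rw [show ((g : G ⧸ zpowers a)) = p from h])
  | inr q => exact Or.inr (by rw [show ((g : G ⧸ zpowers b)) = q from h])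

lemma eq_of_both_cosets (hint : zpowers a ⊓ zpowers b = ⊥) {g h : G}
    (h1 : (g : G ⧸ zpowers a) = (h : G ⧸ zpowers a))
    (h2 : (g : G ⧸ zpowers b) = (h : G ⧸ zpowers b)) : g = h := by
  have m1 : g⁻¹ * h ∈ zpowers a := QuotientGroup.eq.mp h1
  have m2 : g⁻¹ * h ∈ zpowers b := QuotientGroup.eq.mp h2
  have hm : g⁻¹ * h ∈ zpowers a ⊓ zpowers b := ⟨m1, m2⟩
  rw [hint, Subgroup.mem_bot] at hm
  have := inv_mul_eq_one.mp hm
  exact this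

lemma berge_of_cycle {x : (G ⧸ zpowers a) ⊕ (G ⧸ zpowers b)}
    {w : (dualCayleyGraph G a b).Walk x x}
    (hw : w.IsCycle) : BergeCycle (cayInc G a b) w.length := by
  classical
  set ℓ := w.length with hldef
  have hl3 : 3 ≤ ℓ := hw.three_le_length
  haveI : NeZero ℓ := ⟨by omega⟩
  have hval1 : (1 : ZMod ℓ).val = 1 := by
    rw [ZMod.val_one_eq_one_mod]; exact Nat.mod_eq_of_lt (by omega)
  set e : ZMod ℓ → ((G ⧸ zpowers a) ⊕ (G ⧸ zpowers b)) := fun i => w.getVert i.val with he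
  have einj : Function.Injective e := by
    intro i j hij
    exact ZMod.val_injective ℓ
      (IsCycle.getVert_injOn'' hw i.val (ZMod.val_lt i) j.val (ZMod.val_lt j) hij)
  have hadj : ∀ i : ZMod ℓ, (dualCayleyGraph G a b).Adj (e i) (e (i + 1)) := by
    intro i
    have hv : (i + 1).val = (i.val + 1) % ℓ := by
      rw [ZMod.val_add, hval1]
    by_cases hi : i.val + 1 < ℓ
    · have h2 : (i+1).val = i.val + 1 := by rw [hv, Nat.mod_eq_of_lt hi]
      show (dualCayleyGraph G a b).Adj (w.getVert i.val) (w.getVert (i+1).val)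
      rw [h2]
      exact w.adj_getVert_succ (by omega)
    · have hiv : i.val = ℓ - 1 := by have := ZMod.val_lt i; omega
      have h0 : (i+1).val = 0 := by rw [hv, hiv, Nat.sub_add_cancel (by omega), Nat.mod_self]
      have h1 := w.adj_getVert_succ (i := ℓ - 1) (by omega)
      rw [Nat.sub_add_cancel (by omega)] at h1
      have hgl : w.getVert ℓ = x := Walk.getVert_length w
      rw [hgl] at h1
      show (dualCayleyGraph G a b).Adj (w.getVert i.val) (w.getVert (i+1).val)
      rw [hiv, h0, Walk.getVert_zero]
      exact h1
  have hadj' : ∀ i : ZMod ℓ, ∃ g : G, cayInc G a b g (e i) ∧ cayInc G a b g (e (i+1)) :=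
    fun i => (hadj i).1
  choose g hg1 hg2 using hadj'
  have hside : ∀ i : ZMod ℓ, (e i).isLeft ≠ (e (i+1)).isLeft := fun i => (hadj i).2
  have htwo : (2 : ZMod ℓ) ≠ 0 := by
    intro h
    have h2 : ((2:ℕ) : ZMod ℓ) = 0 := by exact_mod_cast h
    rw [ZMod.natCast_eq_zero_iff] at h2
    have := Nat.le_of_dvd (by norm_num) h2
    omega
  have hdet : ∀ i : ZMod ℓ,
      (e i = Sum.inl ((g i : G) : G ⧸ zpowers a) ∧ e (i+1) = Sum.inr ((g i : G) : G ⧸ zpowers b)) ∨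
      (e i = Sum.inr ((g i : G) : G ⧸ zpowers b) ∧ e (i+1) = Sum.inl ((g i : G) : G ⧸ zpowers a)) := by
    intro i
    rcases cayInc_elim (hg1 i) with h1 | h1 <;> rcases cayInc_elim (hg2 i) with h2 | h2
    · exact absurd (by rw [h1, h2]) (hside i)
    · exact Or.inl ⟨h1, h2⟩
    · exact Or.inr ⟨h1, h2⟩
    · exact absurd (by rw [h1, h2]) (hside i)
  have ginj : Function.Injective g := by
    intro i j hgij
    have hcross : ∀ i j : ZMod ℓ, i = j + 1 → i + 1 = j → False := by
      intro i j hij1 hij2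
      apply htwo
      have h2 : i + 2 = i := by
        calc i + 2 = (i + 1) + 1 := by ring
          _ = j + 1 := by rw [hij2]
          _ = i := hij1.symm
      exact add_left_cancel (a := i) (b := (2:ZMod ℓ)) (c := 0) (by rw [add_zero, h2])
    rcases hdet i with ⟨hi1, hi2⟩ | ⟨hi1, hi2⟩ <;> rcases hdet j with ⟨hj1, hj2⟩ | ⟨hj1, hj2⟩
    · exact einj (by rw [hi1, hj1, hgij])
    · exact (hcross i j (einj (by rw [hi1, hj2, hgij])) (einj (by rw [hi2, hj1, hgij]))).elim
    · exact (hcross i j (einj (by rw [hi1, hj2, hgij])) (einj (by rw [hi2, hj1, hgij]))).elim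
    · exact einj (by rw [hi1, hj1, hgij])
  refine ⟨fun i => g (i - 1), e, ?_, einj, ?_⟩
  · intro i j h
    have h1 : i - 1 = j - 1 := ginj h
    have h3 : i - 1 + 1 = j - 1 + 1 := by rw [h1]
    rwa [sub_add_cancel, sub_add_cancel] at h3
  · intro i
    constructor
    · have h1 := hg2 (i - 1)
      rwa [sub_add_cancel] at h1
    · show cayInc G a b (g (i + 1 - 1)) (e i)
      rw [add_sub_cancel_right]
      exact hg1 i

lemma cycle_of_berge (hint : zpowers a ⊓ zpowers b = ⊥) {ℓ : ℕ} (hl : 2 ≤ ℓ)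
    (hB : BergeCycle (cayInc G a b) ℓ) :
    ∃ (x : (G ⧸ zpowers a) ⊕ (G ⧸ zpowers b)) (w : (dualCayleyGraph G a b).Walk x x),
      w.IsCycle ∧ w.length = ℓ := by
  classical
  obtain ⟨v, e, vinj, einj, hinc⟩ := hB
  haveI : NeZero ℓ := ⟨by omega⟩
  have hside : ∀ i : ZMod ℓ, (e i).isLeft ≠ (e (i+1)).isLeft := by
    intro i hiso
    have h1 : cayInc G a b (v (i+1)) (e i) := (hinc i).2
    have h2 : cayInc G a b (v (i+1)) (e (i+1)) := (hinc (i+1)).1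
    have hone : (1 : ZMod ℓ) ≠ 0 := by
      intro h
      have h2' : ((1:ℕ) : ZMod ℓ) = 0 := by exact_mod_cast h
      rw [ZMod.natCast_eq_zero_iff] at h2'
      have := Nat.le_of_dvd (by norm_num) h2'
      omega
    have hee : i ≠ i + 1 := by
      intro h
      exact hone (by simpa using (left_eq_add.mp h))
    rcases cayInc_elim h1 with ha1 | ha1 <;> rcases cayInc_elim h2 with ha2 | ha2
    · exact hee (einj (by rw [ha1, ha2]))
    · rw [ha1, ha2] at hiso; simp at hiso
    · rw [ha1, ha2] at hiso; simp at hiso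
    · exact hee (einj (by rw [ha1, ha2]))
  have hadjZ : ∀ i : ZMod ℓ, (dualCayleyGraph G a b).Adj (e i) (e (i+1)) :=
    fun i => ⟨⟨v (i+1), (hinc i).2, (hinc (i+1)).1⟩, hside i⟩
  have hl3 : 3 ≤ ℓ := by
    rcases Nat.lt_or_ge ℓ 3 with h | h
    · exfalso
      have hl2 : ℓ = 2 := by omega
      subst hl2
      have h00 : cayInc G a b (v 0) (e 0) := (hinc 0).1
      have h10 : cayInc G a b (v 1) (e 0) := by
        have := (hinc 0).2; norm_num at this; exact this
      have h11 : cayInc G a b (v 1) (e 1) := (hinc 1).1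
      have h01 : cayInc G a b (v 0) (e 1) := by
        have := (hinc 1).2
        have h2 : (1 : ZMod 2) + 1 = 0 := by decide
        rwa [h2] at this
      have hs0 := hside 0
      have h2 : (0 : ZMod 2) + 1 = 1 := by decide
      rw [h2] at hs0
      have hv01 : v 0 = v 1 := by
        rcases cayInc_elim h00 with he0 | he0 <;> rcases cayInc_elim h11 with he1 | he1
        · rw [he0, he1] at hs0; simp at hs0
        · -- e 0 = inl ↑(v 0), e 1 = inr ↑(v 1)
          apply eq_of_both_cosets hint
          · have := h10; rw [he0] at this; exact (this : _ = _).symm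
          · have := h01; rw [he1] at this; exact (this : _ = _)
        · -- e 0 = inr ↑(v 0), e 1 = inl ↑(v 1)
          apply (eq_of_both_cosets hint ?_ ?_).symm
          · have := h01; rw [he1] at this; exact (this : _ = _).symm
          · have := h10; rw [he0] at this; exact (this : _ = _)
        · rw [he0, he1] at hs0; simp at hs0
      have := vinj hv01
      simp at this
    · exact h
  set f : ℕ → ((G ⧸ zpowers a) ⊕ (G ⧸ zpowers b)) := fun n => e ((n : ZMod ℓ)) with hfdef
  have hadjN : ∀ n : ℕ, (dualCayleyGraph G a b).Adj (f n) (f (n+1)) := by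
    intro n
    have := hadjZ ((n : ℕ) : ZMod ℓ)
    have hc : ((n+1 : ℕ) : ZMod ℓ) = ((n : ℕ) : ZMod ℓ) + 1 := by push_cast; ring
    rw [hfdef]
    simpa [hc] using this
  obtain ⟨p, hpl, hps, hpe⟩ := exists_walk_of_chain (dualCayleyGraph G a b) (ℓ-1)
    (fun n => f (n+1)) (fun i _ => hadjN (i+1))
  have hstart : f (0+1) = e 1 := by simp [hfdef]
  have hend : f ((ℓ-1)+1) = e 0 := by
    rw [Nat.sub_add_cancel (by omega)]
    simp [hfdef, ZMod.natCast_self]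
  have hval1 : (1 : ZMod ℓ).val = 1 := by
    rw [ZMod.val_one_eq_one_mod]; exact Nat.mod_eq_of_lt (by omega)
  set p' := p.copy hstart hend with hp'def
  have hvv : ∀ (m : ℕ) (k : ZMod ℓ), e ((m : ZMod ℓ)) = e k → m % ℓ = k.val := by
    intro m k hm
    have := congrArg ZMod.val (einj hm)
    rwa [ZMod.val_natCast] at this
  have hpath : p'.IsPath := by
    rw [Walk.isPath_def, Walk.support_copy, hps]
    apply List.Nodup.map_on ?_ List.nodup_range
    intro i hi j hj hij
    rw [List.mem_range] at hi hj
    have h1 : ((i+1 : ℕ) : ZMod ℓ) = ((j+1 : ℕ) : ZMod ℓ) := einj hij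
    have h2 := congrArg ZMod.val h1
    rw [ZMod.val_natCast, ZMod.val_natCast] at h2
    rcases Nat.lt_or_ge (i+1) ℓ with h | h <;> rcases Nat.lt_or_ge (j+1) ℓ with h' | h'
    · rw [Nat.mod_eq_of_lt h, Nat.mod_eq_of_lt h'] at h2; omega
    · rw [Nat.mod_eq_of_lt h] at h2
      have hj1 : j + 1 = ℓ := by omega
      rw [hj1, Nat.mod_self] at h2; omega
    · rw [Nat.mod_eq_of_lt h'] at h2
      have hi1 : i + 1 = ℓ := by omega
      rw [hi1, Nat.mod_self] at h2; omega
    · omega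
  have hedge : s(e 0, e 1) ∉ p'.edges := by
    rw [Walk.edges_copy, hpe]
    intro hmem
    rw [List.mem_map] at hmem
    obtain ⟨i, hi, hEq⟩ := hmem
    rw [List.mem_range] at hi
    rw [Sym2.eq_iff] at hEq
    rcases hEq with ⟨hEq1, _⟩ | ⟨hEq1, hEq2⟩
    · have := hvv (i+1) 0 hEq1
      rw [ZMod.val_zero, Nat.mod_eq_of_lt (by omega)] at this
      omega
    · have hA' := hvv (i+1) 1 hEq1
      rw [hval1, Nat.mod_eq_of_lt (by omega)] at hA'
      have hB' := hvv (i+1+1) 0 hEq2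
      rw [ZMod.val_zero] at hB'
      have hi0 : i = 0 := by omega
      rw [hi0] at hB'
      rw [Nat.mod_eq_of_lt (by omega)] at hB'
      omega
  have hadj01 : (dualCayleyGraph G a b).Adj (e 0) (e 1) := by
    have := hadjZ 0
    simpa using this
  refine ⟨e 0, Walk.cons hadj01 p', Path.cons_isCycle ⟨p', hpath⟩ hadj01 hedge, ?_⟩
  rw [Walk.length_cons, Walk.length_copy, hpl]
  omega

end CayAux

section MoreAux
open Subgroup SimpleGraph

lemma exists_berge {G : Type*} [Group G] [Fintype G] {a b : G}
    (ha : orderOf a = 3) (hb : orderOf b = 3)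
    (hgen : Subgroup.closure {a, b} = ⊤)
    (hint : Subgroup.zpowers a ⊓ Subgroup.zpowers b = ⊥) :
    ∃ ℓ : ℕ, 2 ≤ ℓ ∧ BergeCycle (cayInc G a b) ℓ := by
  classical
  open Subgroup in
  obtain ⟨hA, hB⟩ := not_mem_zpowers_mul ha hb hgen hint
  set c := a * b with hc
  set n := orderOf c with hn
  have hnpos : 0 < n := orderOf_pos c
  have hcn : c ^ n = 1 := by rw [hn]; exact pow_orderOf_eq_one c
  refine ⟨2 * n, by omega, ?_⟩
  haveI : NeZero (2*n) := ⟨by omega⟩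
  set V' : ℕ → G := fun m => c ^ (m / 2) * a ^ (m % 2) with hV
  set E' : ℕ → ((G ⧸ Subgroup.zpowers a) ⊕ (G ⧸ Subgroup.zpowers b)) :=
    fun m => if m % 2 = 0 then Sum.inl ((c ^ (m/2) : G) : G ⧸ Subgroup.zpowers a)
             else Sum.inr ((c ^ (m/2 + 1) : G) : G ⧸ Subgroup.zpowers b) with hE
  have hpow1 : ∀ x y : ℕ, x < n → y < n → c ^ x = c ^ y → x = y := by
    intro x y hx hy hxy
    exact pow_injOn_Iio_orderOf (Set.mem_Iio.mpr (hn ▸ hx)) (Set.mem_Iio.mpr (hn ▸ hy)) hxy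
  have hpow2 : ∀ x y : ℕ, x ≤ n → y ≤ n → c ^ x = c ^ y → x = y ∨ (x = 0 ∧ y = n) ∨ (x = n ∧ y = 0) := by
    have key : ∀ x y : ℕ, x ≤ y → y ≤ n → c ^ x = c ^ y → y - x = 0 ∨ y - x = n := by
      intro x y hxy hyn hcc
      have h1 : c ^ x * c ^ (y - x) = c ^ x * 1 := by
        rw [mul_one, ← pow_add, Nat.add_sub_cancel' hxy, hcc]
      have h2 : c ^ (y - x) = 1 := mul_left_cancel h1
      have h3 : n ∣ y - x := by rw [hn]; exact orderOf_dvd_iff_pow_eq_one.mpr h2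
      rcases Nat.lt_or_ge (y - x) n with h | h
      · exact Or.inl (Nat.eq_zero_of_dvd_of_lt h3 h |>.symm ▸ rfl)
      · right; omega
    intro x y hx hy hxy
    rcases le_total x y with h | h
    · rcases key x y h hy hxy with h' | h'
      · left; omega
      · right; left; omega
    · rcases key y x h hx hxy.symm with h' | h'
      · left; omega
      · right; right; omega
  have memz : ∀ k : ℕ, c ^ k ∈ zpowers c := fun k => pow_mem (mem_zpowers c) k
  -- ℕ-level incidence
  have hIncN : ∀ m : ℕ, cayInc G a b (V' m) (E' m) ∧ cayInc G a b (V' (m+1)) (E' m) := by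
    intro m
    rcases Nat.mod_two_eq_zero_or_one m with hm | hm
    · have hm2 : (m+1) % 2 = 1 := by omega
      have hd : (m+1)/2 = m/2 := by omega
      have hEm : E' m = Sum.inl ((c ^ (m/2) : G) : G ⧸ Subgroup.zpowers a) := by
        rw [hE]; simp [hm]
      constructor
      · rw [hEm]
        show ((V' m : G) : G ⧸ Subgroup.zpowers a) = ((c ^ (m/2) : G) : G ⧸ Subgroup.zpowers a)
        rw [hV]; simp only [hm, pow_zero, mul_one]
      · rw [hEm]
        show ((V' (m+1) : G) : G ⧸ Subgroup.zpowers a) = ((c ^ (m/2) : G) : G ⧸ Subgroup.zpowers a)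
        have hVm : V' (m+1) = c ^ (m/2) * a := by
          rw [hV]; simp only [hm2, hd, pow_one]
        rw [hVm]
        apply QuotientGroup.eq.mpr
        have : (c ^ (m/2) * a)⁻¹ * c ^ (m/2) = a⁻¹ := by group
        rw [this]
        exact inv_mem (mem_zpowers a)
    · have hm2 : (m+1) % 2 = 0 := by omega
      have hd : (m+1)/2 = m/2 + 1 := by omega
      have hEm : E' m = Sum.inr ((c ^ (m/2 + 1) : G) : G ⧸ Subgroup.zpowers b) := by
        rw [hE]; simp only [hm]; norm_num
      constructor
      · rw [hEm]
        show ((V' m : G) : G ⧸ Subgroup.zpowers b) = ((c ^ (m/2 + 1) : G) : G ⧸ Subgroup.zpowers b)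
        have hVm : V' m = c ^ (m/2) * a := by
          rw [hV]; simp only [hm, pow_one]
        rw [hVm]
        apply QuotientGroup.eq.mpr
        have : (c ^ (m/2) * a)⁻¹ * c ^ (m/2 + 1) = b := by
          rw [pow_succ, hc]; group
        rw [this]
        exact mem_zpowers b
      · rw [hEm]
        show ((V' (m+1) : G) : G ⧸ Subgroup.zpowers b) = ((c ^ (m/2 + 1) : G) : G ⧸ Subgroup.zpowers b)
        have hVm : V' (m+1) = c ^ (m/2 + 1) := by
          rw [hV]; simp only [hm2, hd, pow_zero, mul_one]
        rw [hVm]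
  have hV2n : V' (2*n) = V' 0 := by
    rw [hV]
    simp only [Nat.mul_div_cancel_left _ (by norm_num : 0 < 2), Nat.mul_mod_right,
      Nat.zero_div, Nat.zero_mod, pow_zero, mul_one, hcn]
  refine ⟨fun i => V' i.val, fun i => E' i.val, ?_, ?_, ?_⟩
  · -- v injective
    intro i j hij
    apply ZMod.val_injective
    have hi := ZMod.val_lt i
    have hj := ZMod.val_lt j
    beta_reduce at hij
    set iv := i.val
    set jv := j.val
    rcases Nat.mod_two_eq_zero_or_one iv with hpi | hpi <;>
      rcases Nat.mod_two_eq_zero_or_one jv with hpj | hpj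
    · have h2 : c ^ (iv/2) = c ^ (jv/2) := by
        have := hij
        rw [hV] at this
        simpa [hpi, hpj, pow_zero, mul_one] using this
      have := hpow1 _ _ (by omega) (by omega) h2
      omega
    · exfalso
      apply hA
      have h2 : c ^ (iv/2) = c ^ (jv/2) * a := by
        have := hij
        rw [hV] at this
        simpa [hpi, hpj, pow_zero, pow_one, mul_one] using this
      have h3 : a = (c ^ (jv/2))⁻¹ * c ^ (iv/2) := by rw [h2]; group
      rw [h3]
      exact mul_mem (inv_mem (memz _)) (memz _)
    · exfalso
      apply hA
      have h2 : c ^ (iv/2) * a = c ^ (jv/2) := by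
        have := hij
        rw [hV] at this
        simpa [hpi, hpj, pow_zero, pow_one, mul_one] using this
      have h3 : a = (c ^ (iv/2))⁻¹ * c ^ (jv/2) := by rw [← h2]; group
      rw [h3]
      exact mul_mem (inv_mem (memz _)) (memz _)
    · have h2 : c ^ (iv/2) * a = c ^ (jv/2) * a := by
        have := hij
        rw [hV] at this
        simpa [hpi, hpj, pow_one] using this
      have h3 := mul_right_cancel h2
      have := hpow1 _ _ (by omega) (by omega) h3
      omega
  · -- e injective
    intro i j hij
    apply ZMod.val_injective
    have hi := ZMod.val_lt i
    have hj := ZMod.val_lt j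
    beta_reduce at hij
    set iv := i.val
    set jv := j.val
    rcases Nat.mod_two_eq_zero_or_one iv with hpi | hpi <;>
      rcases Nat.mod_two_eq_zero_or_one jv with hpj | hpj
    · have h2 : ((c ^ (iv/2) : G) : G ⧸ Subgroup.zpowers a)
          = ((c ^ (jv/2) : G) : G ⧸ Subgroup.zpowers a) := by
        have := hij
        rw [hE] at this
        simp only [hpi, hpj, if_pos rfl] at this
        exact Sum.inl.inj this
      have h3 : (c ^ (iv/2))⁻¹ * c ^ (jv/2) ∈ zpowers a := QuotientGroup.eq.mp h2
      obtain ⟨t, ht⟩ := Subgroup.mem_zpowers_iff.mp h3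
      have h4 : a ^ t ∈ zpowers c := by
        rw [ht]; exact mul_mem (inv_mem (memz _)) (memz _)
      have h5 : a ^ t = 1 := zpow_eq_one_of_mem_zpowers ha hA h4
      rw [h5] at ht
      have h6 : c ^ (iv/2) = c ^ (jv/2) := by
        have := ht.symm
        rw [inv_mul_eq_one] at this
        exact this
      have := hpow1 _ _ (by omega) (by omega) h6
      omega
    · exfalso
      have h9 := hij
      rw [hE] at h9
      simp only [hpi, hpj] at h9
      simp at h9
    · exfalso
      have h9 := hij
      rw [hE] at h9
      simp only [hpi, hpj] at h9
      simp at h9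
    · have h2 : ((c ^ (iv/2 + 1) : G) : G ⧸ Subgroup.zpowers b)
          = ((c ^ (jv/2 + 1) : G) : G ⧸ Subgroup.zpowers b) := by
        have := hij
        rw [hE] at this
        simp only [hpi, hpj] at this
        norm_num at this
        exact this
      have h3 : (c ^ (iv/2 + 1))⁻¹ * c ^ (jv/2 + 1) ∈ zpowers b := QuotientGroup.eq.mp h2
      obtain ⟨t, ht⟩ := Subgroup.mem_zpowers_iff.mp h3
      have h4 : b ^ t ∈ zpowers c := by
        rw [ht]; exact mul_mem (inv_mem (memz _)) (memz _)
      have h5 : b ^ t = 1 := zpow_eq_one_of_mem_zpowers hb hB h4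
      rw [h5] at ht
      have h6 : c ^ (iv/2 + 1) = c ^ (jv/2 + 1) := by
        have := ht.symm
        rw [inv_mul_eq_one] at this
        exact this
      rcases hpow2 _ _ (by omega) (by omega) h6 with h7 | h7 | h7 <;> omega
  · -- incidence
    intro i
    have hi := ZMod.val_lt i
    constructor
    · exact (hIncN i.val).1
    · have hv : (i + 1).val = (i.val + 1) % (2*n) := by
        rw [ZMod.val_add]
        congr 1
        rw [ZMod.val_one_eq_one_mod]
        have : 1 % (2*n) = 1 := Nat.mod_eq_of_lt (by omega)
        rw [this]
      show cayInc G a b (V' (i+1).val) (E' i.val)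
      by_cases hlt : i.val + 1 < 2*n
      · rw [hv, Nat.mod_eq_of_lt hlt]
        exact (hIncN i.val).2
      · have hivtop : i.val = 2*n - 1 := by omega
        have h0 : (i+1).val = 0 := by
          rw [hv, hivtop, Nat.sub_add_cancel (by omega), Nat.mod_self]
        rw [h0]
        have h1 := (hIncN (2*n - 1)).2
        rw [Nat.sub_add_cancel (by omega), hV2n] at h1
        rw [hivtop]
        exact h1

lemma card_neighbor_inl {G : Type*} [Group G] {a b : G}
    (hint : Subgroup.zpowers a ⊓ Subgroup.zpowers b = ⊥) (p : G ⧸ Subgroup.zpowers a) :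
    Nat.card ((dualCayleyGraph G a b).neighborSet (Sum.inl p)) = orderOf a := by
  rw [← card_fiber a p]
  symm
  apply Nat.card_eq_of_bijective
    (fun g : {g : G // (g : G ⧸ Subgroup.zpowers a) = p} =>
      (⟨Sum.inr ((g.1 : G) : G ⧸ Subgroup.zpowers b),
        ⟨⟨g.1, g.2, rfl⟩, by simp⟩⟩ : (dualCayleyGraph G a b).neighborSet (Sum.inl p)))
  constructor
  · rintro ⟨g, hg⟩ ⟨g', hg'⟩ h
    apply Subtype.ext
    have h2 : ((g : G) : G ⧸ Subgroup.zpowers b) = ((g' : G) : G ⧸ Subgroup.zpowers b) :=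
      Sum.inr.inj (congrArg Subtype.val h)
    exact eq_of_both_cosets hint (hg.trans hg'.symm) h2
  · rintro ⟨y, hy⟩
    obtain ⟨⟨g, h1, h2⟩, hne⟩ := hy
    cases y with
    | inl q => simp at hne
    | inr q =>
      refine ⟨⟨g, h1⟩, ?_⟩
      apply Subtype.ext
      show Sum.inr ((g : G) : G ⧸ Subgroup.zpowers b) = Sum.inr q
      rw [show ((g : G) : G ⧸ Subgroup.zpowers b) = q from h2]

lemma card_neighbor_inr {G : Type*} [Group G] {a b : G}
    (hint : Subgroup.zpowers a ⊓ Subgroup.zpowers b = ⊥) (q : G ⧸ Subgroup.zpowers b) :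
    Nat.card ((dualCayleyGraph G a b).neighborSet (Sum.inr q)) = orderOf b := by
  rw [← card_fiber b q]
  symm
  apply Nat.card_eq_of_bijective
    (fun g : {g : G // (g : G ⧸ Subgroup.zpowers b) = q} =>
      (⟨Sum.inl ((g.1 : G) : G ⧸ Subgroup.zpowers a),
        ⟨⟨g.1, g.2, rfl⟩, by simp⟩⟩ : (dualCayleyGraph G a b).neighborSet (Sum.inr q)))
  constructor
  · rintro ⟨g, hg⟩ ⟨g', hg'⟩ h
    apply Subtype.ext
    have h2 : ((g : G) : G ⧸ Subgroup.zpowers a) = ((g' : G) : G ⧸ Subgroup.zpowers a) :=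
      Sum.inl.inj (congrArg Subtype.val h)
    exact eq_of_both_cosets hint h2 (hg.trans hg'.symm)
  · rintro ⟨y, hy⟩
    obtain ⟨⟨g, h1, h2⟩, hne⟩ := hy
    cases y with
    | inr q' => simp at hne
    | inl p =>
      refine ⟨⟨g, h1⟩, ?_⟩
      apply Subtype.ext
      show Sum.inl ((g : G) : G ⧸ Subgroup.zpowers a) = Sum.inl p
      rw [show ((g : G) : G ⧸ Subgroup.zpowers a) = p from h2]


end MoreAux


/-- If `G` is a finite group generated by `a, b` of order 3 with `⟨a⟩ ∩ ⟨b⟩ = 1`,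
then the dual of `H = 3-Cay(G,{a,b})` is a 3-regular bipartite simple graph on
`(2/3)|G|` vertices (vertices the left cosets of `⟨a⟩` and `⟨b⟩`, adjacent iff
they intersect, bipartition classes the `⟨a⟩`-cosets and the `⟨b⟩`-cosets), whose
girth equals the girth of `H`. -/
theorem dualCayleyGraph_cubic_bipartite_girth {G : Type*} [Group G] [Fintype G]
    (a b : G) (ha : orderOf a = 3) (hb : orderOf b = 3)
    (hgen : Subgroup.closure {a, b} = ⊤)
    (hint : Subgroup.zpowers a ⊓ Subgroup.zpowers b = ⊥) :
    (∀ x, Nat.card ((dualCayleyGraph G a b).neighborSet x) = 3) ∧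
    (∀ x y, (dualCayleyGraph G a b).Adj x y → x.isLeft ≠ y.isLeft) ∧
    3 * Nat.card ((G ⧸ Subgroup.zpowers a) ⊕ (G ⧸ Subgroup.zpowers b))
      = 2 * Nat.card G ∧
    (dualCayleyGraph G a b).egirth = hypergraphGirth (cayInc G a b) := by
  refine ⟨?_, fun x y h => h.2, ?_, ?_⟩
  · intro x
    cases x with
    | inl p => rw [card_neighbor_inl hint p, ha]
    | inr q => rw [card_neighbor_inr hint q, hb]
  · rw [Nat.card_sum]
    have h1 : Nat.card G = Nat.card (G ⧸ Subgroup.zpowers a) * Nat.card (Subgroup.zpowers a) :=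
      Subgroup.card_eq_card_quotient_mul_card_subgroup _
    have h2 : Nat.card G = Nat.card (G ⧸ Subgroup.zpowers b) * Nat.card (Subgroup.zpowers b) :=
      Subgroup.card_eq_card_quotient_mul_card_subgroup _
    rw [Nat.card_zpowers, ha] at h1
    rw [Nat.card_zpowers, hb] at h2
    omega
  · have hEg : (dualCayleyGraph G a b).egirth = hypergraphGirth (cayInc G a b) := by
      apply le_antisymm
      · rw [hypergraphGirth]
        apply le_sInf
        rintro m ⟨ℓ, rfl, hl2, hBc⟩
        obtain ⟨x, w, hw, hwl⟩ := cycle_of_berge hint hl2 hBc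
        have hle : (dualCayleyGraph G a b).egirth ≤ (w.length : ℕ∞) := by
          rw [SimpleGraph.egirth]
          exact iInf_le_of_le x (iInf_le_of_le w (iInf_le_of_le hw le_rfl))
        rwa [hwl] at hle
      · rw [SimpleGraph.le_egirth]
        intro x w hw
        exact sInf_le ⟨w.length, rfl, by have := hw.three_le_length; omega, berge_of_cycle hw⟩
    have hnacyc : ¬ (dualCayleyGraph G a b).IsAcyclic := by
      obtain ⟨ℓ, hl2, hBc⟩ := exists_berge ha hb hgen hint
      obtain ⟨x, w, hw, _⟩ := cycle_of_berge hint hl2 hBc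
      exact fun hacy => hacy w hw
    have hne : (dualCayleyGraph G a b).egirth ≠ ⊤ := by
      rwa [Ne, SimpleGraph.egirth_eq_top]
    exact hEg
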